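/- Let c, q ∈ R^d with r = ‖q - c‖ > 0 and let 0 < ε ≤ 1. Let P be a finite set of points contained in the closed ball B(c, r), and let Star = ∪_{p ∈ P} segment[c, p]. If dist(q, Star) ≤ r√ε / 2, then dist(q, P) ≤ (1 + ε/4)·dist(q, Star). -/
import Mathlib
set_option maxHeartbeats 1000000

open Metric

local notation "⟪" x ", " y "⟫" => @inner ℝ _ _ x y

lemma key_aux {E : Type*} [NormedAddCommGroup E] [InnerProductSpace ℝ E]
    (u v : E) (r D : ℝ) (hru : ‖u‖ = r) (hvr : ‖v‖ ≤ r) (hD0 : 0 ≤ D)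
    (hDr : D < r)
    (hmin : ∀ s : ℝ, s ∈ Set.Icc (0:ℝ) 1 → D ≤ ‖u - s • v‖)
    (hex : ∃ t ∈ Set.Icc (0:ℝ) 1, ‖u - t • v‖ = D) :
    ‖u - v‖ ^ 2 ≤ D ^ 2 + (D ^ 2 / r) ^ 2 := by
  have hrpos : 0 < r := lt_of_le_of_lt hD0 hDr
  have hf : ∀ s : ℝ, ‖u - s • v‖ ^ 2 = ‖u‖ ^ 2 - 2 * s * ⟪u, v⟫ + s ^ 2 * ‖v‖ ^ 2 := by
    intro s
    rw [norm_sub_sq_real, real_inner_smul_right, norm_smul]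
    simp [mul_pow, sq_abs]
    ring
  obtain ⟨t, ht, hDt⟩ := hex
  set I := ⟪u, v⟫ with hI
  set nv := ‖v‖ with hnv
  have hnv0 : 0 ≤ nv := norm_nonneg v
  have hft : D ^ 2 = r ^ 2 - 2 * t * I + t ^ 2 * nv ^ 2 := by
    rw [← hDt, hf, hru]
  have hf1 : ‖u - v‖ ^ 2 = r ^ 2 - 2 * I + nv ^ 2 := by
    have := hf 1
    rw [one_smul] at this
    rw [this, hru]; ring
  rcases le_or_gt I 0 with hI0 | hIpos
  · exfalso
    nlinarith [ht.1, sq_nonneg (t * nv), mul_nonneg ht.1 (neg_nonneg.2 hI0)]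
  rcases le_or_gt (nv ^ 2) I with hT1 | hT2
  · -- nearest point is p itself, ‖u - v‖ ≤ D
    have h1 : ‖u - v‖ ^ 2 ≤ D ^ 2 := by
      nlinarith [mul_nonneg (sub_nonneg.2 ht.2) (sub_nonneg.2 hT1),
        mul_nonneg (sq_nonneg (1 - t)) (sq_nonneg nv)]
    nlinarith [sq_nonneg (D ^ 2 / r)]
  · have hnvpos : 0 < nv := by nlinarith
    set a := I / nv with ha
    have hapos : 0 < a := div_pos hIpos hnvpos
    have haI : I = a * nv := by rw [ha, div_mul_cancel₀ _ hnvpos.ne']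
    have har : a ≤ r := by
      have hcs : I ≤ ‖u‖ * ‖v‖ := real_inner_le_norm u v
      rw [hru, ← hnv] at hcs
      rw [ha, div_le_iff₀ hnvpos]
      nlinarith
    have hanv : a < nv := by rw [ha, div_lt_iff₀ hnvpos]; nlinarith
    have hT : a / nv ∈ Set.Icc (0:ℝ) 1 := by
      constructor
      · positivity
      · rw [div_le_one hnvpos]; exact hanv.le
    have h1 : D ≤ ‖u - (a / nv) • v‖ := hmin _ hT
    have h2 : ‖u - (a / nv) • v‖ ^ 2 = r ^ 2 - a ^ 2 := by
      rw [hf, hru, haI]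
      field_simp
      ring
    have h3 : ‖u - (a / nv) • v‖ ^ 2 ≤ D ^ 2 := by
      rw [h2, hft, haI]
      nlinarith [sq_nonneg (t * nv - a)]
    have hD2 : D ^ 2 = r ^ 2 - a ^ 2 := by
      have h4 : D ^ 2 ≤ ‖u - (a / nv) • v‖ ^ 2 := by
        nlinarith [norm_nonneg (u - (a / nv) • v)]
      rw [← h2]; linarith
    have huv : ‖u - v‖ ^ 2 = D ^ 2 + (nv - a) ^ 2 := by
      rw [hf1, hD2, haI]; ring
    have h5 : nv - a ≤ D ^ 2 / r := by
      rw [le_div_iff₀ hrpos, hD2]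
      nlinarith [mul_nonneg (sub_nonneg.2 hvr) hrpos.le,
        mul_nonneg hapos.le (sub_nonneg.2 har)]
    nlinarith [hanv.le]

/-- let `r = ‖q - c‖ > 0`, `0 < ε ≤ 1`, and `P` a finite nonempty set
of points in the closed ball `B(c, r)`.  With `Star = ∪_{p ∈ P} segment[c, p]`,
if `dist(q, Star) ≤ r √ε / 2` then `dist(q, P) ≤ (1 + ε/4) · dist(q, Star)`. -/
theorem stmt_11 (d : ℕ) (c q : EuclideanSpace ℝ (Fin d)) (r ε : ℝ)
    (hr : r = dist q c) (hrpos : 0 < r) (hε0 : 0 < ε) (hε1 : ε ≤ 1)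
    (P : Finset (EuclideanSpace ℝ (Fin d))) (hPne : P.Nonempty)
    (hPball : ∀ p ∈ P, dist p c ≤ r)
    (Star : Set (EuclideanSpace ℝ (Fin d)))
    (hStar : Star = ⋃ p ∈ P, segment ℝ c p)
    (hclose : infDist q Star ≤ r * Real.sqrt ε / 2) :
    infDist q (P : Set (EuclideanSpace ℝ (Fin d))) ≤ (1 + ε / 4) * infDist q Star := by
  have hsegC : ∀ p : EuclideanSpace ℝ (Fin d), IsCompact (segment ℝ c p) := by
    intro p
    rw [segment_eq_image']
    exact isCompact_Icc.image (by continuity)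
  have hStarC : IsCompact Star := by
    rw [hStar]
    exact P.finite_toSet.isCompact_biUnion (fun p _ => hsegC p)
  obtain ⟨p₀, hp₀⟩ := hPne
  have hStarNe : Star.Nonempty := by
    rw [hStar]
    exact ⟨c, Set.mem_biUnion hp₀ (left_mem_segment ℝ c p₀)⟩
  obtain ⟨x, hxStar, hDx⟩ := hStarC.exists_infDist_eq_dist hStarNe q
  set D := infDist q Star with hD
  have hD0 : 0 ≤ D := infDist_nonneg
  rw [hStar] at hxStar
  obtain ⟨p, hpP, hxseg⟩ := Set.mem_iUnion₂.1 hxStar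
  rw [segment_eq_image'] at hxseg
  obtain ⟨t, ht, hxt⟩ := hxseg
  have hsq : Real.sqrt ε ≤ 1 := by
    rw [show (1:ℝ) = Real.sqrt 1 by simp]
    exact Real.sqrt_le_sqrt hε1
  have hDr : D < r := by nlinarith [Real.sqrt_nonneg ε]
  have hru : ‖q - c‖ = r := by rw [hr, dist_eq_norm]
  have hvr : ‖p - c‖ ≤ r := by rw [← dist_eq_norm]; exact hPball p hpP
  have hnorm : ∀ s : ℝ, dist q (c + s • (p - c)) = ‖(q - c) - s • (p - c)‖ := by
    intro s; rw [dist_eq_norm]; congr 1; abel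
  have hmin : ∀ s : ℝ, s ∈ Set.Icc (0:ℝ) 1 → D ≤ ‖(q - c) - s • (p - c)‖ := by
    intro s hs
    rw [← hnorm]
    refine infDist_le_dist_of_mem ?_
    rw [hStar]
    exact Set.mem_biUnion hpP (segment_eq_image' ℝ c p ▸ ⟨s, hs, rfl⟩)
  have hex : ‖(q - c) - t • (p - c)‖ = D := by
    rw [← hnorm, show c + t • (p - c) = x from hxt]
    exact hDx.symm
  have hkey := key_aux (q - c) (p - c) r D hru hvr hD0 hDr hmin ⟨t, ht, hex⟩
  have hqp : ‖(q - c) - (p - c)‖ = dist q p := by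
    rw [dist_eq_norm]; congr 1; abel
  rw [hqp] at hkey
  have hD2 : D ^ 2 ≤ r ^ 2 * ε / 4 := by
    nlinarith [Real.sq_sqrt hε0.le, Real.sqrt_nonneg ε,
      mul_nonneg hrpos.le (Real.sqrt_nonneg ε)]
  have hfin : dist q p ^ 2 ≤ ((1 + ε / 4) * D) ^ 2 := by
    have h6 : (D ^ 2 / r) ^ 2 ≤ (ε / 4) * D ^ 2 := by
      rw [div_pow, div_le_iff₀ (by positivity)]
      nlinarith [sq_nonneg D]
    nlinarith [sq_nonneg D, sq_nonneg (ε * D)]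
  have hdqp : dist q p ≤ (1 + ε / 4) * D := by
    have h7 := Real.sqrt_le_sqrt hfin
    rwa [Real.sqrt_sq dist_nonneg, Real.sqrt_sq (by positivity)] at h7
  calc infDist q (P : Set (EuclideanSpace ℝ (Fin d))) ≤ dist q p :=
        infDist_le_dist_of_mem (Finset.mem_coe.2 hpP)
    _ ≤ (1 + ε / 4) * D := hdqp
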